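/- Suppose d_1, ..., d_m are polynomials with coefficients in {0,1}, constant coefficients 1, and ∏ d_i = ∑_{s=0}^t x^s. If for indices γ ≠ γ' and naturals s ≠ s', u we have coeff_{d_γ}(s) = coeff_{d_γ}(s') = 1 and coeff_{d_{γ'}}(s'+u) = 1 with u ≥ 1, then for every index δ ≠ γ, coeff_{d_δ}(s+u) = 0. -/

import Mathlib

open Polynomial Finset

theorem otherzero (m t : ℕ) (d : Fin m → ℝ[X])
    (hcoeff : ∀ i k, (d i).coeff k = 0 ∨ (d i).coeff k = 1)
    (h0 : ∀ i, (d i).coeff 0 = 1)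
    (hprod : ∏ i, d i = ∑ s ∈ Finset.range (t + 1), (X : ℝ[X]) ^ s)
    (γ γ' : Fin m) (hγ : γ ≠ γ') (s s' u : ℕ) (hss' : s ≠ s') (hu : 1 ≤ u)
    (h1 : (d γ).coeff s = 1) (h2 : (d γ).coeff s' = 1)
    (h3 : (d γ').coeff (s' + u) = 1) :
    ∀ δ, δ ≠ γ → (d δ).coeff (s + u) = 0 := by
  intro δ hδ
  by_contra hne
  have hδ1 : (d δ).coeff (s + u) = 1 := (hcoeff δ (s + u)).resolve_left hne
  set n : ℕ := s + s' + u with hn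
  -- two distinct finsupps in the antidiagonal
  set μ1 : Fin m →₀ ℕ := Finsupp.single γ s + Finsupp.single γ' (s' + u) with hμ1
  set μ2 : Fin m →₀ ℕ := Finsupp.single γ s' + Finsupp.single δ (s + u) with hμ2
  have hμ1γ : μ1 γ = s := by
    simp [hμ1, Finsupp.single_eq_of_ne' (Ne.symm hγ)]
  have hμ1γ' : μ1 γ' = s' + u := by
    simp [hμ1, Finsupp.single_eq_of_ne' hγ]
  have hμ1o : ∀ i, i ≠ γ → i ≠ γ' → μ1 i = 0 := by
    intro i hi1 hi2
    simp [hμ1, Finsupp.single_eq_of_ne' (Ne.symm hi1), Finsupp.single_eq_of_ne' (Ne.symm hi2)]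
  have hμ2γ : μ2 γ = s' := by
    simp [hμ2, Finsupp.single_eq_of_ne' hδ]
  have hμ2δ : μ2 δ = s + u := by
    simp [hμ2, Finsupp.single_eq_of_ne' (Ne.symm hδ)]
  have hμ2o : ∀ i, i ≠ γ → i ≠ δ → μ2 i = 0 := by
    intro i hi1 hi2
    simp [hμ2, Finsupp.single_eq_of_ne' (Ne.symm hi1), Finsupp.single_eq_of_ne' (Ne.symm hi2)]
  have hne12 : μ1 ≠ μ2 := by
    intro h
    apply hss'
    rw [← hμ1γ, ← hμ2γ, h]
  have hmem1 : μ1 ∈ Finset.finsuppAntidiag (Finset.univ : Finset (Fin m)) n := by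
    rw [Finset.mem_finsuppAntidiag]
    refine ⟨?_, Finset.subset_univ _⟩
    simp only [hμ1, Finsupp.coe_add, Pi.add_apply, Finsupp.single_apply]
    rw [Finset.sum_add_distrib, Finset.sum_ite_eq Finset.univ γ (fun _ => s),
      Finset.sum_ite_eq Finset.univ γ' (fun _ => s' + u)]
    simp [hn]
    ring
  have hmem2 : μ2 ∈ Finset.finsuppAntidiag (Finset.univ : Finset (Fin m)) n := by
    rw [Finset.mem_finsuppAntidiag]
    refine ⟨?_, Finset.subset_univ _⟩
    simp only [hμ2, Finsupp.coe_add, Pi.add_apply, Finsupp.single_apply]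
    rw [Finset.sum_add_distrib, Finset.sum_ite_eq Finset.univ γ (fun _ => s'),
      Finset.sum_ite_eq Finset.univ δ (fun _ => s + u)]
    simp [hn]
    ring
  -- the product of coefficients along μ1 and μ2 equals 1
  have hprod1 : ∏ i, (d i).coeff (μ1 i) = 1 := by
    apply Finset.prod_eq_one
    intro i _
    by_cases hi1 : i = γ
    · subst hi1; rw [hμ1γ]; exact h1
    · by_cases hi2 : i = γ'
      · subst hi2; rw [hμ1γ']; exact h3
      · rw [hμ1o i hi1 hi2]; exact h0 i
  have hprod2 : ∏ i, (d i).coeff (μ2 i) = 1 := by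
    apply Finset.prod_eq_one
    intro i _
    by_cases hi1 : i = γ
    · subst hi1; rw [hμ2γ]; exact h2
    · by_cases hi2 : i = δ
      · subst hi2; rw [hμ2δ]; exact hδ1
      · rw [hμ2o i hi1 hi2]; exact h0 i
  -- coefficient of product at degree n via power series
  have key : (∏ i, d i).coeff n =
      ∑ l ∈ Finset.finsuppAntidiag (Finset.univ : Finset (Fin m)) n,
        ∏ i, (d i).coeff (l i) := by
    have h := PowerSeries.coeff_prod (fun i => ((d i : ℝ[X]) : PowerSeries ℝ)) n
      (Finset.univ : Finset (Fin m))
    rw [show (∏ j, ((d j : ℝ[X]) : PowerSeries ℝ)) = ((∏ i, d i : ℝ[X]) : PowerSeries ℝ) by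
      simp only [← Polynomial.coeToPowerSeries.ringHom_apply]
      exact (map_prod _ _ _).symm] at h
    simp only [Polynomial.coeff_coe] at h
    exact h
  -- lower bound : coefficient ≥ 2
  have hge : (2 : ℝ) ≤ (∏ i, d i).coeff n := by
    rw [key]
    have hsub : ({μ1, μ2} : Finset (Fin m →₀ ℕ)) ⊆
        Finset.finsuppAntidiag (Finset.univ : Finset (Fin m)) n := by
      intro x hx
      rcases Finset.mem_insert.1 hx with rfl | hx
      · exact hmem1
      · rw [Finset.mem_singleton.1 hx]; exact hmem2
    have hnonneg : ∀ l ∈ Finset.finsuppAntidiag (Finset.univ : Finset (Fin m)) n,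
        l ∉ ({μ1, μ2} : Finset (Fin m →₀ ℕ)) → 0 ≤ ∏ i, (d i).coeff (l i) := by
      intro l _ _
      apply Finset.prod_nonneg
      intro i _
      rcases hcoeff i (l i) with h | h <;> rw [h] <;> norm_num
    calc (2 : ℝ) = ∑ l ∈ ({μ1, μ2} : Finset (Fin m →₀ ℕ)), ∏ i, (d i).coeff (l i) := by
          rw [Finset.sum_pair hne12, hprod1, hprod2]; norm_num
      _ ≤ _ := Finset.sum_le_sum_of_subset_of_nonneg hsub hnonneg
  -- upper bound : coefficient ≤ 1
  have hle : (∏ i, d i).coeff n ≤ 1 := by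
    rw [hprod, Polynomial.finset_sum_coeff]
    simp only [Polynomial.coeff_X_pow]
    rw [Finset.sum_ite_eq (Finset.range (t + 1)) n (fun _ => (1 : ℝ))]
    split <;> norm_num
  linarith
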